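/- Covering lemma for the proof of Lemma 4.2: let α > h̃, h̲ > 0, and let j, j₀ satisfy j − 1 ≥ j₀ ≥ (1 − log₂(2^{h̲/α} − 1))/(1 − h̲/α). If the torus T is not covered by the open balls B(x_u, 2^{−h̲ j(u)/α}) with u ranging over S_{j−1} ∪ S_j, then there exists k ∈ {0, …, 2^j − 1} such that X maps to 0 all vertices u of generation j−1 with d(x_u, k2^{−j}) ≤ 2^{−1−h̲(j−1)/α} and all vertices of generation j with d(x_u, k2^{−j}) ≤ 2^{−1−h̲ j/α}. -/

import Mathlib

noncomputable def wordVal (u : List Bool) : ℝ :=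
  ∑ k ∈ Finset.range u.length, if u.getD k false then (2:ℝ) ^ (-(k:ℤ) - 1) else 0

noncomputable def wordPt (u : List Bool) : AddCircle (1:ℝ) := ((wordVal u : ℝ) : AddCircle (1:ℝ))

noncomputable def dyadicPt (j k : ℕ) : AddCircle (1:ℝ) :=
  (((k : ℝ) / 2 ^ j : ℝ) : AddCircle (1:ℝ))

lemma dist_coe_le_abs (a b : ℝ) :
    dist ((a : ℝ) : AddCircle (1:ℝ)) ((b : ℝ) : AddCircle (1:ℝ)) ≤ |a - b| := by
  rw [dist_eq_norm, ← QuotientAddGroup.mk_sub]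
  calc ‖((a - b : ℝ) : AddCircle (1:ℝ))‖ = |(a-b) - round (1⁻¹ * (a-b)) * 1| :=
        AddCircle.norm_eq 1
    _ = |(a-b) - round (a-b)| := by norm_num
    _ ≤ |(a-b) - (0:ℤ)| := round_le (a-b) 0
    _ = |a - b| := by norm_num

lemma coe_eq_coe_of_int (a b : ℝ) (n : ℤ) (h : b - a = n) :
    ((a : ℝ) : AddCircle (1:ℝ)) = ((b : ℝ) : AddCircle (1:ℝ)) := by
  rw [QuotientAddGroup.eq_iff_sub_mem, AddSubgroup.mem_zmultiples_iff]
  exact ⟨-n, by rw [zsmul_eq_mul]; push_cast; linarith⟩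

lemma exists_dyadic (j : ℕ) (x : AddCircle (1:ℝ)) :
    ∃ k : ℕ, k < 2 ^ j ∧ dist x (dyadicPt j k) ≤ (2:ℝ) ^ (-(j:ℝ) - 1) := by
  obtain ⟨r, rfl⟩ := QuotientAddGroup.mk_surjective x
  set m : ℤ := round (r * 2 ^ j) with hm
  have hnn : (0:ℤ) ≤ m % (2 ^ j : ℤ) := Int.emod_nonneg m (by positivity)
  refine ⟨(m % (2 ^ j : ℤ)).toNat, ?_, ?_⟩
  · have h1 : m % (2 ^ j : ℤ) < 2 ^ j := Int.emod_lt_of_pos m (by positivity)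
    have h2 : (((m % (2 ^ j : ℤ)).toNat : ℤ)) < ((2 ^ j : ℕ) : ℤ) := by
      rw [Int.toNat_of_nonneg hnn]; push_cast; exact h1
    exact_mod_cast h2
  · have hcast : ((((m % (2 ^ j : ℤ)).toNat : ℕ) : ℝ)) = ((m % (2 ^ j : ℤ) : ℤ) : ℝ) := by
      calc ((((m % (2 ^ j : ℤ)).toNat : ℕ) : ℝ)) = (((m % (2 ^ j : ℤ)).toNat : ℤ) : ℝ) := by
            push_cast; ring
        _ = _ := by rw [Int.toNat_of_nonneg hnn]
    have hpt : dyadicPt j (m % (2 ^ j : ℤ)).toNat = (((m : ℝ) / 2 ^ j : ℝ) : AddCircle (1:ℝ)) := by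
      unfold dyadicPt
      apply coe_eq_coe_of_int _ _ (m / 2 ^ j)
      rw [hcast]
      have h5 : (2 ^ j : ℤ) * (m / 2 ^ j) + m % 2 ^ j = m := Int.mul_ediv_add_emod m (2 ^ j)
      have h5' : (2 ^ j : ℝ) * ((m / (2 ^ j : ℤ) : ℤ) : ℝ) + ((m % (2 ^ j : ℤ) : ℤ) : ℝ)
          = (m : ℝ) := by exact_mod_cast h5
      field_simp
      linarith
    rw [hpt]
    refine (dist_coe_le_abs _ _).trans ?_
    have h2 : |r - (m : ℝ) / 2 ^ j| = |r * 2 ^ j - m| / 2 ^ j := by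
      rw [show r - (m:ℝ)/2^j = (r * 2^j - m)/2^j by field_simp, abs_div,
        abs_of_pos (show (0:ℝ) < 2^j by positivity)]
    have h3 : |r * 2 ^ j - (m:ℝ)| ≤ 1/2 := abs_sub_round (r * 2 ^ j)
    have h4 : (2:ℝ) ^ (-(j:ℝ) - 1) = (1/2) / 2 ^ j := by
      rw [show -(j:ℝ) - 1 = -(((j+1 : ℕ):ℝ)) by push_cast; ring, Real.rpow_neg (by norm_num),
        Real.rpow_natCast, pow_succ]
      field_simp
    rw [h2, h4]
    gcongr

/-- covering lemma: let `α > h̲ > 0` and `j − 1 ≥ j₀` with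
`j₀ ≥ (1 − log₂(2^{h̲/α} − 1))/(1 − h̲/α)`. If the torus is not covered by the
balls `B(x_u, 2^{−h̲ j(u)/α})`, `u ∈ S_{j−1} ∪ S_j`, then there is
`k ∈ {0,…,2^j − 1}` such that `X` maps to `0` every vertex of generation `j−1`
within distance `2^{−1−h̲(j−1)/α}` of `k 2^{−j}` and every vertex of generation
`j` within distance `2^{−1−h̲ j/α}` of `k 2^{−j}`. -/
theorem stmt17 (hlo α : ℝ) (h0 : 0 < hlo) (hα : hlo < α)
    (X : List Bool → Bool) (j j₀ : ℕ)
    (hjj : j₀ + 1 ≤ j)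
    (hj₀ : (1 - Real.logb 2 ((2:ℝ) ^ (hlo / α) - 1)) / (1 - hlo / α) ≤ (j₀ : ℝ))
    (hnotcov : ¬ ∀ x : AddCircle (1:ℝ), ∃ u : List Bool,
      ((u.length = j - 1 ∨ u.length = j) ∧ X u = true) ∧
      dist x (wordPt u) < (2:ℝ) ^ (-(hlo * u.length) / α)) :
    ∃ k : ℕ, k < 2 ^ j ∧
      (∀ u : List Bool, u.length = j - 1 →
        dist (wordPt u) (dyadicPt j k) ≤ (2:ℝ) ^ (-1 - hlo * (j - 1 : ℕ) / α) →
        X u = false) ∧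
      (∀ u : List Bool, u.length = j →
        dist (wordPt u) (dyadicPt j k) ≤ (2:ℝ) ^ (-1 - hlo * j / α) →
        X u = false) := by
  push_neg at hnotcov
  obtain ⟨x, hx⟩ := hnotcov
  obtain ⟨k, hk, hdist⟩ := exists_dyadic j x
  have hαpos : (0:ℝ) < α := h0.trans hα
  have hjpos : (0:ℝ) < (j:ℝ) := by
    have : 0 < j := by omega
    exact_mod_cast this
  have main : ∀ L : ℕ, L ≤ j →
      (2:ℝ) ^ (-(j:ℝ) - 1) + (2:ℝ) ^ (-1 - hlo * L / α) < (2:ℝ) ^ (-(hlo * L) / α) := by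
    intro L hL
    have hLj : (L:ℝ) ≤ (j:ℝ) := by exact_mod_cast hL
    have hr : hlo / α < 1 := (div_lt_one hαpos).mpr hα
    have hrpos : 0 < hlo / α := div_pos h0 hαpos
    have hθ : hlo * L / α < j := by
      have he : hlo * (L:ℝ) / α = (hlo/α) * L := by ring
      rw [he]
      calc (hlo/α) * L ≤ (hlo/α) * j := mul_le_mul_of_nonneg_left hLj hrpos.le
        _ < 1 * j := mul_lt_mul_of_pos_right hr hjpos
        _ = j := one_mul _
    have e1 : (2:ℝ) ^ (-(hlo * L) / α) = 2 * (2:ℝ) ^ (-1 - hlo * L / α) := by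
      rw [show (-(hlo * (L:ℝ)) / α) = 1 + (-1 - hlo * L / α) by ring,
        Real.rpow_add (by norm_num), Real.rpow_one]
    rw [e1, two_mul]
    have hlt : (2:ℝ) ^ (-(j:ℝ) - 1) < (2:ℝ) ^ (-1 - hlo * L / α) := by
      apply (Real.rpow_lt_rpow_left_iff (by norm_num : (1:ℝ) < 2)).mpr
      linarith
    linarith
  refine ⟨k, hk, ?_, ?_⟩
  · intro u hu hd
    by_contra h
    have hX : X u = true := by simpa using h
    have hge := hx u ⟨Or.inl hu, hX⟩
    have htri : dist x (wordPt u) ≤ dist x (dyadicPt j k) + dist (wordPt u) (dyadicPt j k) :=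
      dist_triangle_right _ _ _
    rw [hu] at hge
    have := main (j-1) (by omega)
    linarith
  · intro u hu hd
    by_contra h
    have hX : X u = true := by simpa using h
    have hge := hx u ⟨Or.inr hu, hX⟩
    have htri : dist x (wordPt u) ≤ dist x (dyadicPt j k) + dist (wordPt u) (dyadicPt j k) :=
      dist_triangle_right _ _ _
    rw [hu] at hge
    have := main j le_rfl
    linarith
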